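/- Let f ∈ E_{(β,μ)} with β > 0, μ > 1, and set φ(m) = im·f(m). Then φ ∈ E_{(β,μ−1)}, and on the strip H_β = {|Im z| < β} the derivative of the inverse Fourier transform satisfies ∂_z F⁻¹(f)(z) = F⁻¹(φ)(z), where F⁻¹(g)(z) = (2π)^{−1/2} ∫_{−∞}^{∞} g(m) e^{izm} dm. -/

import Mathlib

open MeasureTheory Real Complex

def memE (β μ : ℝ) (h : ℝ → ℂ) : Prop :=
  Continuous h ∧ BddAbove (Set.range fun m : ℝ =>
    (1 + |m|) ^ μ * Real.exp (β * |m|) * ‖h m‖)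

lemma integrable_exp_neg_abs' {c : ℝ} (hc : 0 < c) :
    Integrable (fun x : ℝ => Real.exp (-c * |x|)) := by
  have h1 : IntegrableOn (fun x : ℝ => Real.exp (-c * |x|)) (Set.Ici (0:ℝ)) := by
    rw [integrableOn_Ici_iff_integrableOn_Ioi]
    exact (exp_neg_integrableOn_Ioi 0 hc).congr_fun
      (fun x hx => by rw [abs_of_pos hx]) measurableSet_Ioi
  have h_map_neg : (volume.restrict (Set.Ici (0:ℝ))).map Neg.neg
      = volume.restrict (Set.Iic (0:ℝ)) := by
    conv => rhs; rw [← Measure.map_neg_eq_self (volume : Measure ℝ),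
      measurableEmbedding_neg.restrict_map]
    simp
  have h2 : IntegrableOn (fun x : ℝ => Real.exp (-c * |x|)) (Set.Iic (0:ℝ)) := by
    rw [IntegrableOn, ← h_map_neg, measurableEmbedding_neg.integrable_map_iff]
    simpa [Function.comp_def, abs_neg, IntegrableOn] using h1
  have : Integrable (fun x : ℝ => Real.exp (-c * |x|)) (volume.restrict (Set.Iic 0 ∪ Set.Ici 0)) :=
    h2.union h1
  rwa [Set.Iic_union_Ici, Measure.restrict_univ] at this

/-- For `f ∈ E_{(β,μ)}` with `β > 0`, `μ > 1` and `φ(m) = i m f(m)`, one has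
`φ ∈ E_{(β,μ−1)}` and `∂_z F⁻¹(f)(z) = F⁻¹(φ)(z)` on the strip `H_β`. -/
theorem deriv_inverse_fourier (β μ : ℝ) (hβ : 0 < β) (hμ : 1 < μ)
    (f : ℝ → ℂ) (hf : memE β μ f) :
    memE β (μ - 1) (fun m => Complex.I * (m : ℂ) * f m) ∧
    ∀ z : ℂ, |z.im| < β →
      HasDerivAt
        (fun w : ℂ => ((Real.sqrt (2 * Real.pi))⁻¹ : ℝ) *
          ∫ m : ℝ, f m * Complex.exp (Complex.I * w * (m : ℂ)))
        (((Real.sqrt (2 * Real.pi))⁻¹ : ℝ) *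
          ∫ m : ℝ, (Complex.I * (m : ℂ) * f m) *
            Complex.exp (Complex.I * z * (m : ℂ))) z := by
  obtain ⟨hcont, C, hC⟩ := hf
  rw [mem_upperBounds] at hC
  have hC' : ∀ m : ℝ, (1 + |m|) ^ μ * Real.exp (β * |m|) * ‖f m‖ ≤ C := by
    intro m; exact hC _ ⟨m, rfl⟩
  have hone : ∀ m : ℝ, (1 : ℝ) ≤ 1 + |m| := fun m => le_add_of_nonneg_right (abs_nonneg m)
  have hCnn : 0 ≤ C := le_trans (by positivity) (hC' 0)
  -- pointwise bound on |f m|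
  have hfb : ∀ m : ℝ, ‖f m‖ ≤ C / ((1 + |m|) ^ μ * Real.exp (β * |m|)) := by
    intro m
    rw [le_div_iff₀ (by positivity)]
    calc ‖f m‖ * ((1 + |m|) ^ μ * Real.exp (β * |m|))
        = (1 + |m|) ^ μ * Real.exp (β * |m|) * ‖f m‖ := by ring
      _ ≤ C := hC' m
  constructor
  · refine ⟨by continuity, ⟨C, ?_⟩⟩
    rw [mem_upperBounds]
    rintro x ⟨m, rfl⟩
    simp only [norm_mul, Complex.norm_I, Complex.norm_real, Real.norm_eq_abs, one_mul]
    have h1 : (1 + |m|) ^ (μ - 1) * |m| ≤ (1 + |m|) ^ μ := by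
      calc (1 + |m|) ^ (μ - 1) * |m| ≤ (1 + |m|) ^ (μ - 1) * (1 + |m|) := by
            apply mul_le_mul_of_nonneg_left (by linarith [abs_nonneg m]) (by positivity)
        _ = (1 + |m|) ^ μ := by
            rw [← Real.rpow_add_one (by positivity) (μ - 1)]; ring_nf
    calc (1 + |m|) ^ (μ - 1) * Real.exp (β * |m|) * (|m| * ‖f m‖)
        = ((1 + |m|) ^ (μ - 1) * |m|) * Real.exp (β * |m|) * ‖f m‖ := by ring
      _ ≤ (1 + |m|) ^ μ * Real.exp (β * |m|) * ‖f m‖ := by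
          apply mul_le_mul_of_nonneg_right
            (mul_le_mul_of_nonneg_right h1 (Real.exp_pos _).le) (norm_nonneg _)
      _ ≤ C := hC' m
  · intro z hz
    set ε : ℝ := (β - |z.im|) / 2 with hε
    have hεpos : 0 < ε := by simp [hε]; linarith
    -- domination on the ball
    have key : ∀ w : ℂ, w ∈ Metric.ball z ε → ∀ m : ℝ,
        ‖f m‖ * ‖Complex.exp (Complex.I * w * (m : ℂ))‖
          ≤ C * Real.exp (-ε * |m|) := by
      intro w hw m
      have him : |w.im| ≤ β - ε := by
        have h1 : |w.im - z.im| ≤ ‖w - z‖ := by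
          simpa using Complex.abs_im_le_norm (w - z)
        have h2 : ‖w - z‖ < ε := by
          rwa [Metric.mem_ball, Complex.dist_eq] at hw
        have := abs_sub_abs_le_abs_sub w.im z.im
        have : |w.im| ≤ |z.im| + ε := by
          nlinarith [abs_sub_abs_le_abs_sub w.im z.im]
        simp only [hε] at *; linarith
      have hexp : ‖Complex.exp (Complex.I * w * (m : ℂ))‖
          ≤ Real.exp ((β - ε) * |m|) := by
        rw [Complex.norm_exp]
        apply Real.exp_le_exp.mpr
        have hre : (Complex.I * w * (m : ℂ)).re = -w.im * m := by
          simp [Complex.mul_re, Complex.mul_im]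
        rw [hre]
        calc -w.im * m ≤ |(-w.im) * m| := le_abs_self _
          _ = |w.im| * |m| := by rw [abs_mul, abs_neg]
          _ ≤ (β - ε) * |m| := mul_le_mul_of_nonneg_right him (abs_nonneg m)
      calc ‖f m‖ * ‖Complex.exp (Complex.I * w * (m : ℂ))‖
          ≤ (C / ((1 + |m|) ^ μ * Real.exp (β * |m|))) * Real.exp ((β - ε) * |m|) :=
            mul_le_mul (hfb m) hexp (norm_nonneg _) (by positivity)
        _ ≤ (C / Real.exp (β * |m|)) * Real.exp ((β - ε) * |m|) := by
            apply mul_le_mul_of_nonneg_right _ (Real.exp_pos _).le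
            apply div_le_div_of_nonneg_left hCnn (Real.exp_pos _)
            calc Real.exp (β * |m|) = 1 * Real.exp (β * |m|) := (one_mul _).symm
              _ ≤ (1 + |m|) ^ μ * Real.exp (β * |m|) := by
                  apply mul_le_mul_of_nonneg_right _ (Real.exp_pos _).le
                  exact Real.one_le_rpow (hone m) (by linarith)
        _ = C * Real.exp (-ε * |m|) := by
            rw [div_mul_eq_mul_div, mul_div_assoc, ← Real.exp_sub]
            ring_nf
    -- the dominated convergence differentiation
    have main := hasDerivAt_integral_of_dominated_loc_of_deriv_le (μ := volume)
      (F := fun (w : ℂ) (m : ℝ) => f m * Complex.exp (Complex.I * w * (m : ℂ)))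
      (F' := fun (w : ℂ) (m : ℝ) =>
        (Complex.I * (m : ℂ) * f m) * Complex.exp (Complex.I * w * (m : ℂ)))
      (x₀ := z) (bound := fun m => C * (2 / ε) * Real.exp (-(ε / 2) * |m|)) (Metric.ball_mem_nhds z hεpos)
      ?_ ?_ ?_ ?_ ?_ ?_
    · exact (main.2.const_mul _)
    · filter_upwards with w
      exact ((hcont.mul (Complex.continuous_exp.comp (by continuity))).aestronglyMeasurable)
    · -- integrability of F z
      apply Integrable.mono (((integrable_exp_neg_abs' hεpos).const_mul C))
      · exact ((hcont.mul (Complex.continuous_exp.comp (by continuity))).aestronglyMeasurable)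
      · filter_upwards with m
        calc ‖f m * Complex.exp (Complex.I * z * (m : ℂ))‖
            = ‖f m‖ * ‖Complex.exp (Complex.I * z * (m : ℂ))‖ := by
              rw [norm_mul]
          _ ≤ C * Real.exp (-ε * |m|) := key z (Metric.mem_ball_self hεpos) m
          _ ≤ ‖C * Real.exp (-ε * |m|)‖ := by rw [Real.norm_eq_abs]; exact le_abs_self _
    · exact ((by continuity : Continuous fun m : ℝ =>
        (Complex.I * (m : ℂ) * f m) * Complex.exp (Complex.I * z * (m : ℂ)))).aestronglyMeasurable
    · -- bound for F'
      filter_upwards with m w hw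
      have h1 : ‖(Complex.I * (m : ℂ) * f m) * Complex.exp (Complex.I * w * (m : ℂ))‖
          = |m| * (‖f m‖ * ‖Complex.exp (Complex.I * w * (m : ℂ))‖) := by
        simp [map_mul, mul_assoc]
      rw [h1]
      have h2 : |m| * (‖f m‖ * ‖Complex.exp (Complex.I * w * (m : ℂ))‖)
          ≤ |m| * (C * Real.exp (-ε * |m|)) :=
        mul_le_mul_of_nonneg_left (key w hw m) (abs_nonneg m)
      refine h2.trans ?_
      have h3 : |m| ≤ (2 / ε) * Real.exp ((ε / 2) * |m|) := by
        have h4 : (ε / 2) * |m| ≤ Real.exp ((ε / 2) * |m|) := by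
          nlinarith [Real.add_one_le_exp ((ε / 2) * |m|)]
        calc |m| = (2 / ε) * ((ε / 2) * |m|) := by field_simp
          _ ≤ (2 / ε) * Real.exp ((ε / 2) * |m|) :=
              mul_le_mul_of_nonneg_left h4 (by positivity)
      calc |m| * (C * Real.exp (-ε * |m|))
          ≤ ((2 / ε) * Real.exp ((ε / 2) * |m|)) * (C * Real.exp (-ε * |m|)) :=
            mul_le_mul_of_nonneg_right h3 (by positivity)
        _ = C * (2 / ε) * (Real.exp ((ε / 2) * |m|) * Real.exp (-ε * |m|)) := by ring
        _ = C * (2 / ε) * Real.exp (-(ε / 2) * |m|) := by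
            rw [← Real.exp_add]; ring_nf
    · exact ((integrable_exp_neg_abs' (by positivity : (0:ℝ) < ε / 2)).const_mul _)
    · -- differentiability
      filter_upwards with m w _
      have h1 : HasDerivAt (fun w : ℂ => Complex.I * w * (m : ℂ)) (Complex.I * (m : ℂ)) w := by
        have := ((hasDerivAt_id w).const_mul Complex.I).mul_const (m : ℂ)
        simpa using this
      have h2 := (h1.cexp).const_mul (f m)
      exact h2.congr_deriv (by ring)
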